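/- (Verification direction of Theorem 1.5.) Let n ≥ 2, let β ≥ 0 be a real number, let k be a nonnegative integer, let w_k be a harmonic homogeneous polynomial of degree k on ℝⁿ, and define u_k(x) = −2w_k(x) + k(|x|² − 1)w_k(x) and ς_k = k²(n + 2k) + βk(k + n − 2). Then: (a) Δ²u_k = 0 on ℝⁿ; (b) ℰu_k(y) = 0 for every y on the unit sphere ∂𝔹; and (c) ℰ(Δu_k)(y) + β(Δu_k(y) − ℰ²u_k(y)) + ς_k·u_k(y) = 0 for every y ∈ ∂𝔹. Thus u_k is an eigenfunction of the Wentzell bi-Laplace problem on the unit ball with eigenvalue ς_k, since for y ∈ ∂𝔹 the quantity ℰu_k(y) is the outward normal derivative ∂u_k/∂ν(y), ℰ(Δu_k)(y) is ∂(Δu_k)/∂ν(y), and (given ℰu_k|_{∂𝔹} = 0) Δu_k(y) − ℰ²u_k(y) is the Laplace–Beltrami operator of ∂𝔹 applied to u_k|_{∂𝔹}. -/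

import Mathlib

open MvPolynomial


/-- The Euclidean Laplacian `Δf(x) = ∑ i, ∂²f/∂xᵢ²(x)`. -/
noncomputable def lap {n : ℕ} (f : EuclideanSpace ℝ (Fin n) → ℝ)
    (x : EuclideanSpace ℝ (Fin n)) : ℝ :=
  ∑ i : Fin n,
    fderiv ℝ (fun y => fderiv ℝ f y (EuclideanSpace.single i 1)) x (EuclideanSpace.single i 1)

/-- The Euler operator `ℰf(x) = ∑ i, xᵢ ∂f/∂xᵢ(x) = ⟨x, ∇f(x)⟩ = df_x(x)`. -/
noncomputable def euler {n : ℕ} (f : EuclideanSpace ℝ (Fin n) → ℝ)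
    (x : EuclideanSpace ℝ (Fin n)) : ℝ :=
  fderiv ℝ f x x

/-- The total differential of a polynomial function as a continuous linear map. -/
noncomputable def polyD {n : ℕ} (P : MvPolynomial (Fin n) ℝ) (x : EuclideanSpace ℝ (Fin n)) :
    EuclideanSpace ℝ (Fin n) →L[ℝ] ℝ :=
  ∑ i : Fin n, MvPolynomial.eval x (pderiv i P) • EuclideanSpace.proj i

lemma polyD_apply {n : ℕ} (P : MvPolynomial (Fin n) ℝ) (x v : EuclideanSpace ℝ (Fin n)) :
    polyD P x v = ∑ i : Fin n, MvPolynomial.eval x (pderiv i P) * v i := by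
  simp [polyD]

lemma hasFDerivAt_eval {n : ℕ} (P : MvPolynomial (Fin n) ℝ) (x : EuclideanSpace ℝ (Fin n)) :
    HasFDerivAt (fun y : EuclideanSpace ℝ (Fin n) => MvPolynomial.eval y P) (polyD P x) x := by
  induction P using MvPolynomial.induction_on with
  | C a =>
      have : polyD (n := n) (C a) x = 0 := by
        ext v; simp [polyD_apply]
      rw [this]
      simpa using hasFDerivAt_const a x
  | add p q hp hq =>
      have : polyD (p + q) x = polyD p x + polyD q x := by
        ext v; simp [polyD_apply, Finset.sum_add_distrib, add_mul]
      rw [this]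
      exact (hp.add hq).congr_of_eventuallyEq (Filter.Eventually.of_forall fun y => by simp)
  | mul_X p i hp =>
      have h2 : HasFDerivAt (fun y : EuclideanSpace ℝ (Fin n) => y i)
          (EuclideanSpace.proj (𝕜 := ℝ) i) x :=
        (EuclideanSpace.proj (𝕜 := ℝ) (ι := Fin n) i).hasFDerivAt (x := x)
      have := hp.mul h2
      have heq : polyD (p * X i) x
          = MvPolynomial.eval x p • EuclideanSpace.proj (𝕜 := ℝ) i + (x i) • polyD p x := by
        ext v
        simp only [polyD_apply, ContinuousLinearMap.add_apply, ContinuousLinearMap.smul_apply,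
          PiLp.proj_apply, smul_eq_mul, pderiv_mul, pderiv_X, map_add, map_mul,
          eval_X, Pi.single_apply, add_mul]
        rw [Finset.sum_add_distrib]
        have h1 : ∑ j : Fin n, MvPolynomial.eval x p *
            MvPolynomial.eval x (if i = j then 1 else (0:MvPolynomial (Fin n) ℝ)) * v j
            = MvPolynomial.eval x p * v i := by
          rw [Finset.sum_eq_single i]
          · simp
          · intro b _ hb; simp [Ne.symm hb]
          · simp
        rw [h1, Finset.mul_sum]
        rw [add_comm]
        congr 1
        exact Finset.sum_congr rfl fun j _ => by ring
      rw [heq]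
      exact this.congr_of_eventuallyEq (Filter.Eventually.of_forall fun y => by simp)

lemma fderiv_eval_apply {n : ℕ} (P : MvPolynomial (Fin n) ℝ) (x v : EuclideanSpace ℝ (Fin n)) :
    fderiv ℝ (fun y : EuclideanSpace ℝ (Fin n) => MvPolynomial.eval y P) x v
      = ∑ i : Fin n, MvPolynomial.eval x (pderiv i P) * v i := by
  rw [(hasFDerivAt_eval P x).fderiv, polyD_apply]

/-- The polynomial Euler operator, as a linear map. -/
noncomputable def EpL (n : ℕ) : MvPolynomial (Fin n) ℝ →ₗ[ℝ] MvPolynomial (Fin n) ℝ :=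
  ∑ i : Fin n, (LinearMap.mulLeft ℝ (X i)).comp (pderiv i).toLinearMap

/-- The polynomial Laplacian, as a linear map. -/
noncomputable def LpL (n : ℕ) : MvPolynomial (Fin n) ℝ →ₗ[ℝ] MvPolynomial (Fin n) ℝ :=
  ∑ i : Fin n, (pderiv i).toLinearMap.comp (pderiv i).toLinearMap

lemma EpL_apply {n : ℕ} (P : MvPolynomial (Fin n) ℝ) :
    EpL n P = ∑ i : Fin n, X i * pderiv i P := by
  simp [EpL, LinearMap.sum_apply]

lemma LpL_apply {n : ℕ} (P : MvPolynomial (Fin n) ℝ) :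
    LpL n P = ∑ i : Fin n, pderiv i (pderiv i P) := by
  simp [LpL, LinearMap.sum_apply]

lemma euler_eval {n : ℕ} (P : MvPolynomial (Fin n) ℝ) (x : EuclideanSpace ℝ (Fin n)) :
    euler (fun y : EuclideanSpace ℝ (Fin n) => MvPolynomial.eval y P) x
      = MvPolynomial.eval x (EpL n P) := by
  rw [euler, fderiv_eval_apply, EpL_apply]
  simp only [map_sum, map_mul, eval_X]
  exact Finset.sum_congr rfl fun i _ => by ring

lemma lap_eval {n : ℕ} (P : MvPolynomial (Fin n) ℝ) (x : EuclideanSpace ℝ (Fin n)) :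
    lap (fun y : EuclideanSpace ℝ (Fin n) => MvPolynomial.eval y P) x
      = MvPolynomial.eval x (LpL n P) := by
  rw [lap, LpL_apply, map_sum]
  refine Finset.sum_congr rfl fun i _ => ?_
  have hfun : (fun y : EuclideanSpace ℝ (Fin n) =>
      fderiv ℝ (fun z : EuclideanSpace ℝ (Fin n) => MvPolynomial.eval z P) y
        (EuclideanSpace.single i 1))
      = fun y : EuclideanSpace ℝ (Fin n) => MvPolynomial.eval y (pderiv i P) := by
    funext y
    rw [fderiv_eval_apply]
    rw [Finset.sum_eq_single i]
    · simp [EuclideanSpace.single_apply]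
    · intro b _ hb; simp [EuclideanSpace.single_apply, hb]
    · simp
  rw [hfun, fderiv_eval_apply, Finset.sum_eq_single i]
  · simp [EuclideanSpace.single_apply]
  · intro b _ hb; simp [EuclideanSpace.single_apply, hb]
  · simp

lemma EpL_mul {n : ℕ} (A B : MvPolynomial (Fin n) ℝ) :
    EpL n (A * B) = EpL n A * B + A * EpL n B := by
  simp only [EpL_apply, pderiv_mul, mul_add, Finset.sum_add_distrib, Finset.mul_sum,
    Finset.sum_mul]
  congr 1
  · exact Finset.sum_congr rfl fun i _ => by ring
  · exact Finset.sum_congr rfl fun i _ => by ring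

lemma LpL_mul {n : ℕ} (A B : MvPolynomial (Fin n) ℝ) :
    LpL n (A * B) = LpL n A * B + (2:ℝ) • (∑ i : Fin n, pderiv i A * pderiv i B)
      + A * LpL n B := by
  rw [LpL_apply]
  have h1 : ∀ i : Fin n, pderiv i (pderiv i (A * B))
      = pderiv i (pderiv i A) * B + (pderiv i A * pderiv i B + pderiv i A * pderiv i B)
        + A * pderiv i (pderiv i B) := by
    intro i
    rw [pderiv_mul, Derivation.map_add, pderiv_mul, pderiv_mul]
    ring
  rw [Finset.sum_congr rfl fun i _ => h1 i, Finset.sum_add_distrib, Finset.sum_add_distrib,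
    LpL_apply, LpL_apply]
  congr 1
  · congr 1
    · rw [Finset.sum_mul]
    · rw [Finset.smul_sum]
      refine Finset.sum_congr rfl fun i _ => ?_
      rw [two_smul]
  · rw [Finset.mul_sum]

/-- the squared-norm polynomial -/
noncomputable def qpoly (n : ℕ) : MvPolynomial (Fin n) ℝ := ∑ i : Fin n, X i ^ 2

lemma pderiv_qpoly {n : ℕ} (j : Fin n) : pderiv j (qpoly n) = (2:ℝ) • X j := by
  have h0 : pderiv j (qpoly n) = ∑ i : Fin n, pderiv j (X i ^ 2) := by
    rw [qpoly]; exact map_sum _ _ _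
  rw [h0, Finset.sum_eq_single j]
  · rw [sq, pderiv_mul, pderiv_X_self, two_smul]; ring
  · intro b _ hb
    rw [sq, pderiv_mul, pderiv_X_of_ne hb]; simp
  · simp

lemma eval_qpoly {n : ℕ} (x : EuclideanSpace ℝ (Fin n)) :
    MvPolynomial.eval x (qpoly n) = ‖x‖ ^ 2 := by
  rw [qpoly, map_sum]
  rw [EuclideanSpace.norm_eq, Real.sq_sqrt (by positivity)]
  simp [sq_abs]

lemma LpL_qpoly (n : ℕ) : LpL n (qpoly n) = (2 * (n:ℝ)) • 1 := by
  rw [LpL_apply]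
  have h1 : ∀ i : Fin n, pderiv i (pderiv i (qpoly n)) = (2:ℝ) • 1 := by
    intro i
    rw [pderiv_qpoly, Derivation.map_smul, pderiv_X_self]
  rw [Finset.sum_congr rfl fun i _ => h1 i, Finset.sum_const, Finset.card_univ,
    Fintype.card_fin]
  rw [← Nat.cast_smul_eq_nsmul ℝ n ((2:ℝ) • (1 : MvPolynomial (Fin n) ℝ)), smul_smul]
  congr 1
  ring

lemma EpL_qpoly (n : ℕ) : EpL n (qpoly n) = (2:ℝ) • qpoly n := by
  rw [EpL_apply]
  have h1 : ∀ i : Fin n, X i * pderiv i (qpoly n) = (2:ℝ) • X i ^ 2 := fun i => by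
    rw [pderiv_qpoly, mul_smul_comm, sq]
  rw [Finset.sum_congr rfl fun i _ => h1 i, ← Finset.smul_sum, qpoly]

lemma cross_qpoly {n : ℕ} (B : MvPolynomial (Fin n) ℝ) :
    ∑ i : Fin n, pderiv i (qpoly n) * pderiv i B = (2:ℝ) • EpL n B := by
  rw [EpL_apply, Finset.smul_sum]
  refine Finset.sum_congr rfl fun i _ => ?_
  rw [pderiv_qpoly, smul_mul_assoc]

lemma EpL_monomial {n : ℕ} (d : Fin n →₀ ℕ) (a : ℝ) :
    EpL n (monomial d a) = ((Finsupp.degree d : ℕ) : ℝ) • monomial d a := by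
  rw [EpL_apply]
  have h1 : ∀ i : Fin n, X i * pderiv i (monomial d a)
      = ((d i : ℝ)) • monomial d a := by
    intro i
    rw [pderiv_monomial]
    by_cases h : d i = 0
    · simp [h]
    · have hd : Finsupp.single i 1 + (d - Finsupp.single i 1) = d := by
        ext j
        simp only [Finsupp.add_apply, Finsupp.tsub_apply, Finsupp.single_apply]
        rcases eq_or_ne i j with rfl | hij
        · simp only [if_pos rfl, if_true]
          omega
        · simp [hij]
      rw [X, monomial_mul, one_mul, hd, smul_monomial, smul_eq_mul, mul_comm]
  rw [Finset.sum_congr rfl fun i _ => h1 i, ← Finset.sum_smul]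
  congr 1
  rw [Finsupp.degree_apply, Nat.cast_sum, Finset.sum_subset (Finset.subset_univ d.support)]
  intro i _ hi
  simp [Finsupp.notMem_support_iff.mp hi]

lemma EpL_isHomogeneous {n k : ℕ} {P : MvPolynomial (Fin n) ℝ} (hP : P.IsHomogeneous k) :
    EpL n P = (k : ℝ) • P := by
  conv_lhs => rw [P.as_sum]
  rw [map_sum]
  conv_rhs => rw [P.as_sum, Finset.smul_sum]
  refine Finset.sum_congr rfl fun d hd => ?_
  rw [EpL_monomial]
  congr 2
  have := hP (MvPolynomial.mem_support_iff.mp hd)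
  rw [Finsupp.degree_eq_weight_one]
  exact this


/-- verification direction of Theorem 1.5: If `n ≥ 2`, `β ≥ 0`, `w_k` is a
harmonic homogeneous polynomial of degree `k` on `ℝⁿ`, `u_k(x) = -2w_k(x) + k(|x|²-1)w_k(x)`
and `ς_k = k²(n+2k) + βk(k+n-2)`, then: (a) `Δ²u_k = 0` on `ℝⁿ`; (b) `ℰu_k = 0` on the unit
sphere; (c) `ℰ(Δu_k) + β(Δu_k - ℰ²u_k) + ς_k·u_k = 0` on the unit sphere. Thus `u_k` is an
eigenfunction of the Wentzell bi-Laplace problem on the unit ball with eigenvalue `ς_k`. -/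
theorem wentzell_eigenfunction_verification (n : ℕ) (hn : 2 ≤ n) (β : ℝ) (hβ : 0 ≤ β)
    (k : ℕ) (P : MvPolynomial (Fin n) ℝ) (hP : P.IsHomogeneous k)
    (hPharm : ∀ x : EuclideanSpace ℝ (Fin n), lap (fun y => MvPolynomial.eval y P) x = 0)
    (u : EuclideanSpace ℝ (Fin n) → ℝ)
    (hu : ∀ x, u x = -2 * MvPolynomial.eval x P +
      (k : ℝ) * (‖x‖ ^ 2 - 1) * MvPolynomial.eval x P)
    (ς : ℝ)
    (hς : ς = (k : ℝ) ^ 2 * ((n : ℝ) + 2 * (k : ℝ)) +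
      β * (k : ℝ) * ((k : ℝ) + (n : ℝ) - 2)) :
    (∀ x : EuclideanSpace ℝ (Fin n), lap (lap u) x = 0) ∧
    (∀ y : EuclideanSpace ℝ (Fin n), ‖y‖ = 1 → euler u y = 0) ∧
    (∀ y : EuclideanSpace ℝ (Fin n), ‖y‖ = 1 →
      euler (lap u) y + β * (lap u y - euler (euler u) y) + ς * u y = 0) := by
  classical
  set U : MvPolynomial (Fin n) ℝ := (k:ℝ) • (qpoly n * P) - ((k:ℝ) + 2) • P with hU
  have hueq : u = fun x : EuclideanSpace ℝ (Fin n) => MvPolynomial.eval x U := by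
    funext x
    rw [hu, hU]
    simp only [map_sub, smul_eval, map_mul, eval_qpoly]
    ring
  have hLP : LpL n P = 0 := by
    apply MvPolynomial.funext
    intro x
    have h := hPharm (WithLp.toLp 2 x)
    rw [lap_eval] at h
    simpa using h
  have hEP : EpL n P = (k:ℝ) • P := EpL_isHomogeneous hP
  have hLqP : LpL n (qpoly n * P) = (2*(n:ℝ) + 4*(k:ℝ)) • P := by
    rw [LpL_mul, LpL_qpoly, cross_qpoly, hEP, hLP, mul_zero, add_zero, smul_mul_assoc, one_mul]
    module
  have hEqP : EpL n (qpoly n * P)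
      = (2:ℝ) • (qpoly n * P) + (k:ℝ) • (qpoly n * P) := by
    rw [EpL_mul, EpL_qpoly, hEP, smul_mul_assoc, mul_smul_comm]
  have hEU : EpL n U
      = ((k:ℝ)*((k:ℝ)+2)) • (qpoly n * P) - ((k:ℝ)*((k:ℝ)+2)) • P := by
    rw [hU, map_sub, map_smul, map_smul, hEqP, hEP]
    module
  have hLU : LpL n U = (2*(k:ℝ)*((n:ℝ)+2*(k:ℝ))) • P := by
    rw [hU, map_sub, map_smul, map_smul, hLqP, hLP]
    module
  have hLLU : LpL n (LpL n U) = 0 := by rw [hLU, map_smul, hLP, smul_zero]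
  have hELU : EpL n (LpL n U) = ((2*(k:ℝ)*((n:ℝ)+2*(k:ℝ)))*(k:ℝ)) • P := by
    rw [hLU, map_smul, hEP, smul_smul]
  have hEEU : EpL n (EpL n U)
      = ((k:ℝ)*((k:ℝ)+2)) • ((2:ℝ) • (qpoly n * P) + (k:ℝ) • (qpoly n * P))
        - ((k:ℝ)*((k:ℝ)+2)) • ((k:ℝ) • P) := by
    rw [hEU, map_sub, map_smul, map_smul, hEqP, hEP]
  have hlapu : lap u = fun x : EuclideanSpace ℝ (Fin n) =>
      MvPolynomial.eval x (LpL n U) := by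
    funext x
    rw [hueq, lap_eval]
  have heuleru : euler u = fun x : EuclideanSpace ℝ (Fin n) =>
      MvPolynomial.eval x (EpL n U) := by
    funext x
    rw [hueq, euler_eval]
  refine ⟨?_, ?_, ?_⟩
  · intro x
    rw [hlapu, lap_eval, hLLU]
    simp
  · intro y hy
    rw [hueq, euler_eval, hEU]
    simp only [map_sub, smul_eval, map_mul, eval_qpoly, hy]
    ring
  · intro y hy
    rw [hlapu, euler_eval, heuleru, euler_eval, hELU, hEEU, hLU]
    simp only [hLU, hU, hu, map_sub, map_add, smul_eval, map_mul, eval_qpoly, hy, hς, one_pow]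
    ring
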